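/- Let 0 < ε < 1/100, let B > 0, let κ be a positive integer, and let C > 0 satisfy B ≤ ε·C. Let p_1,…,p_n > 0 be job sizes and suppose there exists an assignment of the jobs to κ machines whose minimum machine load is at least C. Then for every partition of the jobs into bags in which every job of size greater than B is alone in its bag and every bag not containing such a job has total size at most 3B, there exists an assignment of the bags to the κ machines whose minimum machine load is at least (1−3ε)·C. -/
import Mathlib

open Finset

-- Subset-sum lemma: from a set of items of positive weight at most δ with total ≥ t,
-- pick a subset with sum in [t, t+δ].
lemma lem1 {β : Type*} (w : β → ℝ) (δ : ℝ) (hδ : 0 ≤ δ) :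
    ∀ (S : Finset β) (t : ℝ), 0 ≤ t → (∀ b ∈ S, 0 < w b ∧ w b ≤ δ) →
      t ≤ ∑ b ∈ S, w b →
      ∃ T ⊆ S, t ≤ ∑ b ∈ T, w b ∧ ∑ b ∈ T, w b ≤ t + δ := by
  intro S
  induction S using Finset.cons_induction with
  | empty =>
    intro t ht _ hsum
    simp only [Finset.sum_empty] at hsum
    exact ⟨∅, Finset.Subset.refl _, by simp; linarith, by simp; linarith⟩
  | cons a S' ha ih =>
    intro t ht hw hsum
    rw [Finset.sum_cons] at hsum
    by_cases hta : t ≤ w a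
    · refine ⟨{a}, by simp, by simpa using hta, ?_⟩
      have := (hw a (Finset.mem_cons_self _ _)).2
      simp only [Finset.sum_singleton]; linarith
    · push_neg at hta
      have hwa := (hw a (Finset.mem_cons_self _ _)).1
      obtain ⟨T, hT, h1, h2⟩ := ih (t - w a) (by linarith)
        (fun b hb => hw b (Finset.mem_cons_of_mem hb)) (by linarith)
      have haT : a ∉ T := fun h => ha (hT h)
      refine ⟨Finset.cons a T haT, ?_, ?_, ?_⟩
      · intro x hx
        rcases Finset.mem_cons.mp hx with rfl | hx'
        · exact Finset.mem_cons_self _ _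
        · exact Finset.mem_cons_of_mem (hT hx')
      · rw [Finset.sum_cons]; linarith
      · rw [Finset.sum_cons]; linarith

-- Greedy allocation over machines.
lemma lem2 {α β : Type*} [DecidableEq α] [DecidableEq β] [Nonempty α]
    (w : β → ℝ) (δ : ℝ) (hδ : 0 ≤ δ) (g t : α → ℝ) (hg : ∀ i, 0 ≤ g i)
    (ht : ∀ i, t i ≤ 0 ∨ t i + δ ≤ g i) :
    ∀ (I : Finset α) (S : Finset β), (∀ b ∈ S, 0 < w b ∧ w b ≤ δ) →
      (∑ i ∈ I, g i) ≤ ∑ b ∈ S, w b →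
      ∃ f : β → α, ∀ i ∈ I, t i ≤ ∑ b ∈ S.filter (fun b => f b = i), w b := by
  intro I
  induction I using Finset.cons_induction with
  | empty =>
    intro S _ _
    exact ⟨fun _ => Classical.arbitrary α, by simp⟩
  | cons a I' haI ih =>
    intro S hw hsum
    rw [Finset.sum_cons] at hsum
    have hI'g : 0 ≤ ∑ i ∈ I', g i := Finset.sum_nonneg fun i _ => hg i
    by_cases h0 : t a ≤ 0
    · obtain ⟨f, hf⟩ := ih S hw (by have := hg a; linarith)
      refine ⟨f, fun i hi => ?_⟩
      rcases Finset.mem_cons.mp hi with rfl | hi'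
      · exact h0.trans (Finset.sum_nonneg fun b hb =>
          (hw b (Finset.mem_filter.mp hb).1).1.le)
      · exact hf i hi'
    · have hta : t a + δ ≤ g a := (ht a).resolve_left h0
      push_neg at h0
      obtain ⟨T, hTS, h1, h2⟩ := lem1 w δ hδ S (t a) h0.le hw (by linarith)
      have hsub : ∑ b ∈ S \ T, w b = ∑ b ∈ S, w b - ∑ b ∈ T, w b :=
        Finset.sum_sdiff_eq_sub hTS
      obtain ⟨f', hf'⟩ := ih (S \ T)
        (fun b hb => hw b (Finset.mem_sdiff.mp hb).1) (by rw [hsub]; linarith)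
      refine ⟨fun b => if b ∈ T then a else f' b, fun i hi => ?_⟩
      rcases Finset.mem_cons.mp hi with rfl | hi'
      · refine h1.trans (Finset.sum_le_sum_of_subset_of_nonneg ?_
          fun b hb _ => (hw b (Finset.mem_filter.mp hb).1).1.le)
        intro b hb
        exact Finset.mem_filter.mpr ⟨hTS hb, by simp [hb]⟩
      · refine (hf' i hi').trans (Finset.sum_le_sum_of_subset_of_nonneg ?_
          fun b hb _ => (hw b (Finset.mem_filter.mp hb).1).1.le)
        intro b hb
        obtain ⟨hbS, hbf⟩ := Finset.mem_filter.mp hb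
        obtain ⟨hbS', hbT⟩ := Finset.mem_sdiff.mp hbS
        exact Finset.mem_filter.mpr ⟨hbS', by simp [hbT, hbf]⟩

theorem stmt9 (ε B C : ℝ) (hε : 0 < ε) (hε1 : ε < 1 / 100) (hB : 0 < B)
    (κ : ℕ) (hκ : 0 < κ) (hC : 0 < C) (hBC : B ≤ ε * C)
    (n : ℕ) (p : Fin n → ℝ) (hp : ∀ j, 0 < p j)
    (τ : Fin n → Fin κ)
    (hτ : ∀ i : Fin κ, C ≤ ∑ j ∈ Finset.univ.filter (fun j => τ j = i), p j)
    (m : ℕ) (σ : Fin n → Fin m)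
    (halone : ∀ j j', B < p j → σ j' = σ j → j' = j)
    (hsmall : ∀ b : Fin m, (∀ j, σ j = b → p j ≤ B) →
        (∑ j ∈ Finset.univ.filter (fun j => σ j = b), p j) ≤ 3 * B) :
    ∃ τ' : Fin m → Fin κ, ∀ i : Fin κ,
      (1 - 3 * ε) * C ≤ ∑ j ∈ Finset.univ.filter (fun j => τ' (σ j) = i), p j := by
  classical
  have hκne : Nonempty (Fin κ) := ⟨⟨0, hκ⟩⟩
  set big : Fin m → Prop := fun b => ∃ j, σ j = b ∧ B < p j with hbigdef
  set bagsum : Fin m → ℝ := fun b => ∑ j ∈ Finset.univ.filter (fun j => σ j = b), p j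
    with hbagsumdef
  have hbig_iff : ∀ j : Fin n, big (σ j) ↔ B < p j := by
    intro j
    constructor
    · rintro ⟨j', hj1, hj2⟩
      have heq := halone j' j hj2 hj1.symm
      rwa [heq]
    · intro h; exact ⟨j, rfl, h⟩
  have hbag_nonneg : ∀ b, 0 ≤ bagsum b := fun b =>
    Finset.sum_nonneg fun j _ => (hp j).le
  have hbag_small : ∀ b, ¬ big b → bagsum b ≤ 3 * B := by
    intro b hb
    refine hsmall b fun j hj => ?_
    by_contra h
    push_neg at h
    exact hb ⟨j, hj, h⟩
  set BigLoad : Fin κ → ℝ :=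
    fun i => ∑ j ∈ Finset.univ.filter (fun j => τ j = i ∧ B < p j), p j with hBLdef
  have hBL_nonneg : ∀ i, 0 ≤ BigLoad i := fun i =>
    Finset.sum_nonneg fun j _ => (hp j).le
  -- total load splits
  have hsplit : ∀ i, (∑ j ∈ Finset.univ.filter (fun j => τ j = i), p j) =
      BigLoad i + ∑ j ∈ Finset.univ.filter (fun j => τ j = i ∧ ¬ B < p j), p j := by
    intro i
    rw [hBLdef]
    rw [← Finset.sum_filter_add_sum_filter_not (Finset.univ.filter (fun j => τ j = i))
      (fun j => B < p j), Finset.filter_filter, Finset.filter_filter]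
  set S : Finset (Fin m) := Finset.univ.filter (fun b => ¬ big b ∧ 0 < bagsum b) with hSdef
  -- mass inequality
  have hmass : (∑ i : Fin κ, max 0 (C - BigLoad i)) ≤ ∑ b ∈ S, bagsum b := by
    have step1 : ∀ i : Fin κ, max 0 (C - BigLoad i) ≤
        ∑ j ∈ Finset.univ.filter (fun j => τ j = i ∧ ¬ B < p j), p j := by
      intro i
      have h1 := hτ i
      rw [hsplit i] at h1
      have h2 : (0:ℝ) ≤ ∑ j ∈ Finset.univ.filter (fun j => τ j = i ∧ ¬ B < p j), p j :=
        Finset.sum_nonneg fun j _ => (hp j).le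
      exact max_le h2 (by linarith)
    have step2 : ∑ i : Fin κ, (∑ j ∈ Finset.univ.filter (fun j => τ j = i ∧ ¬ B < p j), p j)
        = ∑ j ∈ Finset.univ.filter (fun j => ¬ B < p j), p j := by
      rw [← Finset.sum_fiberwise (Finset.univ.filter (fun j => ¬ B < p j)) τ p]
      apply Finset.sum_congr rfl
      intro i _
      rw [Finset.filter_filter]
      apply Finset.sum_congr _ (fun _ _ => rfl)
      apply Finset.filter_congr
      intro j _
      tauto
    have step3 : ∑ b ∈ Finset.univ.filter (fun b => ¬ big b), bagsum b
        = ∑ j ∈ Finset.univ.filter (fun j => ¬ B < p j), p j := by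
      rw [hbagsumdef]
      rw [Finset.sum_fiberwise_eq_sum_filter Finset.univ
        (Finset.univ.filter (fun b => ¬ big b)) σ p]
      apply Finset.sum_congr _ (fun _ _ => rfl)
      apply Finset.filter_congr
      intro j _
      simp only [Finset.mem_filter, Finset.mem_univ, true_and]
      rw [hbig_iff j]
    have step4 : ∑ b ∈ S, bagsum b = ∑ b ∈ Finset.univ.filter (fun b => ¬ big b), bagsum b := by
      apply Finset.sum_subset
      · intro b hb
        simp only [hSdef, Finset.mem_filter, Finset.mem_univ, true_and] at hb ⊢
        exact hb.1
      · intro b hb1 hb2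
        simp only [hSdef, Finset.mem_filter, Finset.mem_univ, true_and] at hb1 hb2
        push_neg at hb2
        have := hb2 hb1
        exact le_antisymm (by linarith) (hbag_nonneg b)
    calc (∑ i : Fin κ, max 0 (C - BigLoad i))
        ≤ ∑ i : Fin κ, (∑ j ∈ Finset.univ.filter (fun j => τ j = i ∧ ¬ B < p j), p j) :=
          Finset.sum_le_sum fun i _ => step1 i
      _ = ∑ j ∈ Finset.univ.filter (fun j => ¬ B < p j), p j := step2
      _ = ∑ b ∈ Finset.univ.filter (fun b => ¬ big b), bagsum b := step3.symm
      _ = ∑ b ∈ S, bagsum b := step4.symm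
  -- apply lem2
  have h3B : (0:ℝ) ≤ 3 * B := by linarith
  have hεC : 3 * B ≤ 3 * (ε * C) := by linarith
  obtain ⟨f, hf⟩ := lem2 bagsum (3 * B) h3B (fun i => max 0 (C - BigLoad i))
    (fun i => (1 - 3 * ε) * C - BigLoad i)
    (fun i => le_max_left _ _)
    (by
      intro i
      by_cases h : (1 - 3 * ε) * C - BigLoad i ≤ 0
      · exact Or.inl h
      · right
        push_neg at h
        have : (1 - 3 * ε) * C - BigLoad i + 3 * B ≤ C - BigLoad i := by nlinarith
        exact this.trans (le_max_right _ _))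
    Finset.univ S
    (by
      intro b hb
      simp only [hSdef, Finset.mem_filter, Finset.mem_univ, true_and] at hb
      exact ⟨hb.2, hbag_small b hb.1⟩)
    hmass
  -- define assignment
  set τ' : Fin m → Fin κ := fun b => if h : big b then τ h.choose else f b with hτ'def
  have hbigval : ∀ j : Fin n, B < p j → τ' (σ j) = τ j := by
    intro j hj
    have hb : big (σ j) := ⟨j, rfl, hj⟩
    simp only [hτ'def]
    rw [dif_pos hb]
    have hspec := hb.choose_spec
    have heq : j = hb.choose := halone hb.choose j hspec.2 hspec.1.symm
    rw [← heq]
  have hsmallval : ∀ j : Fin n, ¬ B < p j → τ' (σ j) = f (σ j) := by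
    intro j hj
    simp only [hτ'def]
    rw [dif_neg]
    rw [hbig_iff j]
    exact hj
  refine ⟨τ', ?_⟩
  intro i
  -- split machine load
  have hsplit2 : (∑ j ∈ Finset.univ.filter (fun j => τ' (σ j) = i), p j) =
      (∑ j ∈ Finset.univ.filter (fun j => τ' (σ j) = i ∧ B < p j), p j)
      + ∑ j ∈ Finset.univ.filter (fun j => τ' (σ j) = i ∧ ¬ B < p j), p j := by
    rw [← Finset.sum_filter_add_sum_filter_not
      (Finset.univ.filter (fun j => τ' (σ j) = i)) (fun j => B < p j),
      Finset.filter_filter, Finset.filter_filter]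
  have hbigpart : (∑ j ∈ Finset.univ.filter (fun j => τ' (σ j) = i ∧ B < p j), p j)
      = BigLoad i := by
    rw [hBLdef]
    apply Finset.sum_congr _ (fun _ _ => rfl)
    apply Finset.filter_congr
    intro j _
    constructor
    · rintro ⟨h1, h2⟩
      rw [hbigval j h2] at h1
      exact ⟨h1, h2⟩
    · rintro ⟨h1, h2⟩
      refine ⟨?_, h2⟩
      rw [hbigval j h2]
      exact h1
  have hsmallpart : ((1 - 3 * ε) * C - BigLoad i) ≤
      ∑ j ∈ Finset.univ.filter (fun j => τ' (σ j) = i ∧ ¬ B < p j), p j := by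
    refine (hf i (Finset.mem_univ i)).trans ?_
    have hfib : ∑ b ∈ S.filter (fun b => f b = i), bagsum b
        = ∑ j ∈ Finset.univ.filter (fun j => σ j ∈ S.filter (fun b => f b = i)), p j := by
      rw [hbagsumdef]
      exact Finset.sum_fiberwise_eq_sum_filter Finset.univ _ σ p
    rw [hfib]
    apply Finset.sum_le_sum_of_subset_of_nonneg
    · intro j hj
      simp only [Finset.mem_filter, Finset.mem_univ, true_and, hSdef] at hj ⊢
      obtain ⟨⟨hnb, _⟩, hfb⟩ := hj
      have hjsmall : ¬ B < p j := by rw [← hbig_iff j]; exact hnb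
      refine ⟨?_, hjsmall⟩
      rw [hsmallval j hjsmall]
      exact hfb
    · intro j _ _
      exact (hp j).le
  rw [hsplit2, hbigpart]
  linarith
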